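/- The ideal conv(I_d,(1/2^{n+1})) on [0,1]∩ℚ is Σ⁰₆ as a subset of the Cantor space 2^{[0,1]∩ℚ}; specifically, membership A ∈ conv(I_d,(1/2^{n+1})) is equivalent to the explicit ∃∀∃∃∀∃ formula given in Lemma 3 involving the submeasure φ. -/

import Mathlib

open Filter Topology Set

/-- The upper-density submeasure `φ(A) = sup_n |A ∩ [0,n]| / (n+1)`. -/
noncomputable def phi (A : Set ℕ) : ℝ :=
  ⨆ n : ℕ, ((A ∩ Set.Iic n).ncard : ℝ) / (n + 1)

/-- The ideal of asymptotic density zero sets. -/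
def densityZero : Set (Set ℕ) :=
  {A | Tendsto (fun n : ℕ => ((A ∩ Set.Iic n).ncard : ℝ) / (n + 1)) atTop (𝓝 0)}

/-- `I` is an ideal on `X` (containing all finite sets, proper). -/
def IsIdeal {X : Type*} (I : Set (Set X)) : Prop :=
  (∀ A ∈ I, ∀ B, B ⊆ A → B ∈ I) ∧ (∀ A ∈ I, ∀ B ∈ I, A ∪ B ∈ I) ∧
    (∀ A : Set X, A.Finite → A ∈ I) ∧ Set.univ ∉ I

/-- `J` is a P⁺-ideal. -/
def IsPPlus {X : Type*} (J : Set (Set X)) : Prop :=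
  ∀ A : ℕ → Set X, (∀ n, A (n + 1) ⊆ A n) → (∀ n, A n ∉ J) →
    ∃ B ∉ J, ∀ n, (B \ A n).Finite

/-- Katětov order. -/
def KatLE {X Y : Type*} (I : Set (Set X)) (J : Set (Set Y)) : Prop :=
  ∃ f : Y → X, ∀ A ∈ I, f ⁻¹' A ∈ J

/-- membership in the class `S` of strictly decreasing null sequences in `(0,1/2]`. -/
def memS (α : ℕ → ℝ) : Prop :=
  (∀ n, 0 < α n) ∧ (∀ n, α n ≤ 1 / 2) ∧ StrictAnti α ∧ Tendsto α atTop (𝓝 0)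

/-- The underlying countable set `[0,1] ∩ ℚ`. -/
abbrev Q01 : Type := ↥(Set.Icc (0 : ℚ) 1)

/-- The real number corresponding to a point of `[0,1] ∩ ℚ`. -/
noncomputable def qr (q : Q01) : ℝ := ((q : ℚ) : ℝ)

/-- The set `S ⊆ [0,1]∩ℚ` converges to `x ∈ ℝ`. -/
def ConvTo (S : Set Q01) (x : ℝ) : Prop :=
  ∀ ε > (0 : ℝ), {q ∈ S | ε ≤ |qr q - x|}.Finite

/-- `S` converges `I`-quickly with respect to `α` to the point `x`. -/
def IQuickTo (I : Set (Set ℕ)) (α : ℕ → ℝ) (S : Set Q01) (x : ℝ) : Prop :=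
  ConvTo S x ∧
    {n : ℕ | ∃ q ∈ S, α (n + 1) ≤ |qr q - x| ∧ |qr q - x| < α n} ∈ I

/-- `S` converges `I`-quickly with respect to `α`. -/
def IQuick (I : Set (Set ℕ)) (α : ℕ → ℝ) (S : Set Q01) : Prop :=
  ∃ x ∈ Set.Icc (0 : ℝ) 1, IQuickTo I α S x

/-- The ideal `conv(I,(α_n))` on `[0,1] ∩ ℚ`. -/
def convQI (I : Set (Set ℕ)) (α : ℕ → ℝ) : Set (Set Q01) :=
  {A | ∃ F : Finset (Set Q01), (∀ S ∈ F, IQuick I α S) ∧ A ⊆ ⋃₀ ↑F}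

/-- The ideal `conv` on `[0,1] ∩ ℚ` generated by convergent sequences. -/
def convIdeal : Set (Set Q01) :=
  {A | ∃ F : Finset (Set Q01),
    (∀ S ∈ F, ∃ x ∈ Set.Icc (0 : ℝ) 1, ConvTo S x) ∧ A ⊆ ⋃₀ ↑F}

/-- Identify a point of Cantor space `2^X` with a subset of `X`. -/
def toSet {X : Type*} (f : X → Bool) : Set X := {x | f x = true}

/-- `Σ⁰ₙ` sets of a topological space: `IsSigma0 1 = open`,
`IsSigma0 (n+1)` = countable unions of complements of `Σ⁰ₙ` sets. -/
def IsSigma0 {X : Type*} [TopologicalSpace X] : ℕ → Set X → Prop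
  | 0, _ => False
  | 1, S => IsOpen S
  | (n + 2), S => ∃ f : ℕ → Set X, (∀ k, IsSigma0 (n + 1) (f k)ᶜ) ∧ S = ⋃ k, f k



namespace ConvSigma

noncomputable def al (n : ℕ) : ℝ := 1 / 2 ^ (n + 1)

lemma al_pos (n : ℕ) : 0 < al n := by unfold al; positivity

lemma al_le_al {m n : ℕ} (h : m ≤ n) : al n ≤ al m :=
  one_div_pow_le_one_div_pow_of_le one_le_two (by omega)

lemma al_lt_al {m n : ℕ} (h : m < n) : al n < al m :=
  one_div_pow_lt_one_div_pow_of_lt one_lt_two (by omega)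

lemma al_half (n : ℕ) : al (n + 1) = al n / 2 := by
  unfold al; rw [pow_succ]; ring

lemma exists_al_lt {c : ℝ} (hc : 0 < c) : ∃ N : ℕ, al N < c := by
  obtain ⟨t, ht⟩ := exists_pow_lt_of_lt_one hc (by norm_num : (1 / 2 : ℝ) < 1)
  refine ⟨t, lt_of_le_of_lt ?_ ht⟩
  unfold al
  rw [one_div_pow]
  exact one_div_pow_le_one_div_pow_of_le one_le_two (Nat.le_succ t)

lemma inter_Iic_finite (B : Set ℕ) (n : ℕ) : (B ∩ Iic n).Finite :=
  (finite_Iic n).subset inter_subset_right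

/-! ### density zero lemmas -/

lemma dz_squeeze {A B : Set ℕ} (hA : A ∈ densityZero)
    (h : ∀ n, (B ∩ Iic n).ncard ≤ (A ∩ Iic n).ncard) : B ∈ densityZero := by
  refine squeeze_zero (fun n => by positivity) (fun n => ?_) hA
  have : ((B ∩ Iic n).ncard : ℝ) ≤ ((A ∩ Iic n).ncard : ℝ) := by exact_mod_cast h n
  gcongr

lemma dz_mono {A B : Set ℕ} (hA : A ∈ densityZero) (hBA : B ⊆ A) : B ∈ densityZero :=
  dz_squeeze hA fun n => Set.ncard_le_ncard (inter_subset_inter_left _ hBA)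
    (inter_Iic_finite A n)

lemma dz_of_count_le {A B : Set ℕ} (c k : ℕ) (hA : A ∈ densityZero)
    (h : ∀ n, (B ∩ Iic n).ncard ≤ c + k * (A ∩ Iic n).ncard) : B ∈ densityZero := by
  have lim : Tendsto (fun n : ℕ =>
      (c : ℝ) / (n + 1) + k * (((A ∩ Iic n).ncard : ℝ) / (n + 1))) atTop (𝓝 0) := by
    have h1 : Tendsto (fun n : ℕ => (c : ℝ) / (n + 1)) atTop (𝓝 0) := by
      have := tendsto_one_div_add_atTop_nhds_zero_nat.const_mul (c : ℝ)
      simpa [mul_one_div, div_eq_mul_inv] using this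
    have h2 := hA.const_mul (k : ℝ)
    simpa using h1.add h2
  refine squeeze_zero (fun n => by positivity) (fun n => ?_) lim
  have hcast : ((B ∩ Iic n).ncard : ℝ) ≤ (c : ℝ) + k * ((A ∩ Iic n).ncard : ℝ) := by
    exact_mod_cast h n
  have hn : (0:ℝ) < (n:ℝ) + 1 := by positivity
  calc ((B ∩ Iic n).ncard : ℝ) / (n + 1)
      ≤ ((c : ℝ) + k * ((A ∩ Iic n).ncard : ℝ)) / (n + 1) := by gcongr
    _ = (c : ℝ) / (n + 1) + k * (((A ∩ Iic n).ncard : ℝ) / (n + 1)) := by ring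

lemma dz_empty : (∅ : Set ℕ) ∈ densityZero := by
  have : ∀ n : ℕ, (((∅ : Set ℕ) ∩ Iic n).ncard : ℝ) / (n + 1) = 0 := by
    intro n; simp
  unfold densityZero
  simp only [mem_setOf_eq]
  simpa [this] using tendsto_const_nhds (α := ℝ) (f := atTop (α := ℕ))

lemma dz_finite {B : Set ℕ} (hB : B.Finite) : B ∈ densityZero := by
  refine dz_of_count_le B.ncard 0 dz_empty fun n => ?_
  simpa using Set.ncard_le_ncard inter_subset_left hB

lemma dz_union {A B : Set ℕ} (hA : A ∈ densityZero) (hB : B ∈ densityZero) :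
    A ∪ B ∈ densityZero := by
  have lim := hA.add hB
  rw [add_zero] at lim
  refine squeeze_zero (fun n => by positivity) (fun n => ?_) lim
  have h1 : ((A ∪ B) ∩ Iic n).ncard ≤ (A ∩ Iic n).ncard + (B ∩ Iic n).ncard := by
    rw [union_inter_distrib_right]
    exact Set.ncard_union_le _ _
  have hcast : (((A ∪ B) ∩ Iic n).ncard : ℝ) ≤
      ((A ∩ Iic n).ncard : ℝ) + ((B ∩ Iic n).ncard : ℝ) := by exact_mod_cast h1
  have hn : (0:ℝ) < (n:ℝ) + 1 := by positivity
  calc (((A ∪ B) ∩ Iic n).ncard : ℝ) / (n + 1)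
      ≤ (((A ∩ Iic n).ncard : ℝ) + ((B ∩ Iic n).ncard : ℝ)) / (n + 1) := by gcongr
    _ = ((A ∩ Iic n).ncard : ℝ) / (n + 1) + ((B ∩ Iic n).ncard : ℝ) / (n + 1) := by ring

lemma dz_of_forall_bound {B : Set ℕ}
    (h : ∀ j : ℕ, ∃ m, ∀ n, m ≤ n → ((B ∩ Iic n).ncard : ℝ) * (j + 1) ≤ n + 1) :
    B ∈ densityZero := by
  rw [densityZero, mem_setOf_eq, Metric.tendsto_atTop]
  intro ε hε
  obtain ⟨j, hj⟩ := exists_nat_one_div_lt hε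
  obtain ⟨m, hm⟩ := h j
  refine ⟨m, fun n hn => ?_⟩
  have hb := hm n hn
  have hn1 : (0:ℝ) < (n:ℝ) + 1 := by positivity
  have hj1 : (0:ℝ) < (j:ℝ) + 1 := by positivity
  have hd : ((B ∩ Iic n).ncard : ℝ) / (n + 1) ≤ 1 / (j + 1) := by
    rw [div_le_div_iff₀ hn1 hj1]
    linarith
  rw [Real.dist_eq, sub_zero, abs_of_nonneg (by positivity)]
  exact lt_of_le_of_lt hd hj

/-! ### shifts -/

def shifts (B : Set ℕ) : Set ℕ :=
  {n | n + 1 ∈ B ∨ n ∈ B ∨ (1 ≤ n ∧ n - 1 ∈ B)}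

lemma dz_shifts {B : Set ℕ} (hB : B ∈ densityZero) : shifts B ∈ densityZero := by
  refine dz_of_count_le 1 3 hB fun n => ?_
  have hsub : shifts B ∩ Iic n ⊆
      ({n' | n' + 1 ∈ B} ∩ Iic n) ∪ ((B ∩ Iic n) ∪ ({n' | 1 ≤ n' ∧ n' - 1 ∈ B} ∩ Iic n)) := by
    rintro x ⟨hx, hxn⟩
    rcases hx with h | h | h
    · exact Or.inl ⟨h, hxn⟩
    · exact Or.inr (Or.inl ⟨h, hxn⟩)
    · exact Or.inr (Or.inr ⟨h, hxn⟩)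
  have hfin1 : ({n' | n' + 1 ∈ B} ∩ Iic n).Finite := inter_Iic_finite _ n
  have hfin2 : (B ∩ Iic n).Finite := inter_Iic_finite _ n
  have hfin3 : ({n' | 1 ≤ n' ∧ n' - 1 ∈ B} ∩ Iic n).Finite := inter_Iic_finite _ n
  have c1 : ({n' | n' + 1 ∈ B} ∩ Iic n).ncard ≤ 1 + (B ∩ Iic n).ncard := by
    have himg : (fun t => t + 1) '' ({n' | n' + 1 ∈ B} ∩ Iic n) ⊆ insert (n+1) (B ∩ Iic n) := by
      rintro y ⟨x, ⟨hxB, hxn⟩, rfl⟩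
      rcases Nat.lt_or_ge x n with h | h
      · exact Set.mem_insert_of_mem _ ⟨hxB, Set.mem_Iic.2 (show x + 1 ≤ n by omega)⟩
      · have : x = n := le_antisymm hxn h
        subst this; exact Set.mem_insert _ _
    calc ({n' | n' + 1 ∈ B} ∩ Iic n).ncard
        = ((fun t => t + 1) '' ({n' | n' + 1 ∈ B} ∩ Iic n)).ncard :=
          (Set.ncard_image_of_injective _ (fun a b h => by omega)).symm
      _ ≤ (insert (n+1) (B ∩ Iic n)).ncard :=
          Set.ncard_le_ncard himg (hfin2.insert _)
      _ ≤ 1 + (B ∩ Iic n).ncard := by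
          calc (insert (n+1) (B ∩ Iic n)).ncard
              ≤ (B ∩ Iic n).ncard + 1 := Set.ncard_insert_le _ _
            _ = 1 + (B ∩ Iic n).ncard := Nat.add_comm _ _
  have c3 : ({n' | 1 ≤ n' ∧ n' - 1 ∈ B} ∩ Iic n).ncard ≤ (B ∩ Iic n).ncard := by
    have himg : (fun t => t - 1) '' ({n' | 1 ≤ n' ∧ n' - 1 ∈ B} ∩ Iic n) ⊆ B ∩ Iic n := by
      rintro y ⟨x, ⟨⟨hx1, hxB⟩, hxn⟩, rfl⟩
      exact ⟨hxB, Set.mem_Iic.2 (le_trans (Nat.sub_le x 1) (Set.mem_Iic.1 hxn))⟩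
    have hinj : Set.InjOn (fun t => t - 1) ({n' | 1 ≤ n' ∧ n' - 1 ∈ B} ∩ Iic n) := by
      rintro a ⟨⟨ha, _⟩, _⟩ b ⟨⟨hb, _⟩, _⟩ hab
      simp only at hab; omega
    calc ({n' | 1 ≤ n' ∧ n' - 1 ∈ B} ∩ Iic n).ncard
        = ((fun t => t - 1) '' ({n' | 1 ≤ n' ∧ n' - 1 ∈ B} ∩ Iic n)).ncard :=
          (Set.ncard_image_of_injOn hinj).symm
      _ ≤ (B ∩ Iic n).ncard := Set.ncard_le_ncard himg hfin2
  calc (shifts B ∩ Iic n).ncard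
      ≤ (({n' | n' + 1 ∈ B} ∩ Iic n) ∪ ((B ∩ Iic n) ∪
          ({n' | 1 ≤ n' ∧ n' - 1 ∈ B} ∩ Iic n))).ncard :=
        Set.ncard_le_ncard hsub ((hfin1.union (hfin2.union hfin3)))
    _ ≤ ({n' | n' + 1 ∈ B} ∩ Iic n).ncard + ((B ∩ Iic n) ∪
          ({n' | 1 ≤ n' ∧ n' - 1 ∈ B} ∩ Iic n)).ncard := Set.ncard_union_le _ _
    _ ≤ ({n' | n' + 1 ∈ B} ∩ Iic n).ncard + ((B ∩ Iic n).ncard +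
          ({n' | 1 ≤ n' ∧ n' - 1 ∈ B} ∩ Iic n).ncard) := by
        have := Set.ncard_union_le (B ∩ Iic n) ({n' | 1 ≤ n' ∧ n' - 1 ∈ B} ∩ Iic n)
        omega
    _ ≤ 1 + 3 * (B ∩ Iic n).ncard := by omega

/-! ### annuli -/

def AnnSet (S : Set Q01) (x : ℝ) : Set ℕ :=
  {n | ∃ q ∈ S, al (n + 1) ≤ |qr q - x| ∧ |qr q - x| < al n}

def FatAnn (S : Set Q01) (x : ℝ) (δ : ℝ) : Set ℕ :=
  {n | ∃ q ∈ S, al (n + 1) ≤ |qr q - x| + δ ∧ |qr q - x| < al n + δ}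

lemma ann_mono {S T : Set Q01} (h : S ⊆ T) (x : ℝ) : AnnSet S x ⊆ AnnSet T x := by
  rintro n ⟨q, hq, h1, h2⟩; exact ⟨q, h hq, h1, h2⟩

lemma ann_index_subsingleton (r : ℝ) : {n : ℕ | al (n + 1) ≤ r ∧ r < al n}.Subsingleton := by
  rintro a ⟨ha1, ha2⟩ b ⟨hb1, hb2⟩
  by_contra hab
  rcases Nat.lt_or_ge a b with h | h
  · exact absurd hb2 (not_lt.2 (le_trans (al_le_al (show a + 1 ≤ b by omega)) ha1))
  · have hba : b < a := by omega
    exact absurd ha2 (not_lt.2 (le_trans (al_le_al (show b + 1 ≤ a by omega)) hb1))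

lemma ann_finite_of_finite {S : Set Q01} (hS : S.Finite) (x : ℝ) : (AnnSet S x).Finite := by
  have : AnnSet S x ⊆ ⋃ q ∈ S, {n : ℕ | al (n + 1) ≤ |qr q - x| ∧ |qr q - x| < al n} := by
    rintro n ⟨q, hq, h1, h2⟩
    exact mem_biUnion hq ⟨h1, h2⟩
  exact ((hS.biUnion fun q _ => (ann_index_subsingleton _).finite)).subset this

lemma finite_al_gt {c : ℝ} (hc : 0 < c) : {n : ℕ | c < al n}.Finite := by
  obtain ⟨N, hN⟩ := exists_al_lt hc
  refine (finite_Iio N).subset fun n hn => ?_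
  simp only [mem_setOf_eq] at hn
  by_contra h
  simp only [mem_Iio, not_lt] at h
  exact absurd (lt_of_lt_of_le hn (al_le_al h)) (not_lt.2 hN.le)

lemma ann_finite_of_conv_ne {S : Set Q01} {y x : ℝ} (hS : ConvTo S y) (hxy : x ≠ y) :
    (AnnSet S x).Finite := by
  set d := |y - x| with hd
  have hd0 : 0 < d := abs_pos.2 (sub_ne_zero.2 (fun h => hxy h.symm))
  have hE : {q ∈ S | d / 2 ≤ |qr q - y|}.Finite := hS (d / 2) (by positivity)
  have hsub : AnnSet S x ⊆ AnnSet {q ∈ S | d / 2 ≤ |qr q - y|} x ∪ {n | d / 2 < al n} := by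
    rintro n ⟨q, hq, h1, h2⟩
    by_cases hqE : d / 2 ≤ |qr q - y|
    · exact Or.inl ⟨q, ⟨hq, hqE⟩, h1, h2⟩
    · push_neg at hqE
      have : d / 2 ≤ |qr q - x| := by
        have h3 : |y - x| ≤ |qr q - y| + |qr q - x| := by
          have := abs_sub_le y (qr q) x
          rwa [abs_sub_comm y (qr q)] at this
        linarith
      exact Or.inr (lt_of_le_of_lt this h2)
  exact ((ann_finite_of_finite hE x).union (finite_al_gt (by positivity))).subset hsub

lemma ann_to_fat {S : Set Q01} {x x' δ : ℝ} (h : |x - x'| ≤ δ) :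
    AnnSet S x ⊆ FatAnn S x' δ := by
  rintro n ⟨q, hq, h1, h2⟩
  have t1 : |qr q - x| ≤ |qr q - x'| + |x' - x| := abs_sub_le _ _ _
  have t2 : |qr q - x'| ≤ |qr q - x| + |x - x'| := abs_sub_le _ _ _
  rw [abs_sub_comm x' x] at t1
  exact ⟨q, hq, by linarith, by linarith⟩

lemma fat_to_shifts {S : Set Q01} {x x' : ℝ} {s n : ℕ} (hd : |x - x'| ≤ 1 / 2 ^ s)
    (hn : 1 ≤ n) (hns : n + 4 ≤ s) (hmem : n ∈ FatAnn S x' (1 / 2 ^ s)) :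
    n ∈ shifts (AnnSet S x) := by
  obtain ⟨n', rfl⟩ : ∃ n', n = n' + 1 := ⟨n - 1, by omega⟩
  obtain ⟨q, hq, h1, h2⟩ := hmem
  rw [show n' + 1 + 1 = n' + 2 by omega] at h1
  set δ : ℝ := 1 / 2 ^ s with hδ
  have hδ0 : 0 < δ := by positivity
  have hδle : δ ≤ al (n' + 4) := by
    rw [hδ]; unfold al
    exact one_div_pow_le_one_div_pow_of_le one_le_two (by omega)
  have t1 : |qr q - x'| ≤ |qr q - x| + |x - x'| := abs_sub_le (qr q) x x'
  have t2 : |qr q - x| ≤ |qr q - x'| + |x - x'| := by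
    have h := abs_sub_le (qr q) x' x
    rwa [abs_sub_comm x' x] at h
  have key1 : al (n' + 3) ≤ |qr q - x| := by
    have h4 : al (n' + 2) ≤ |qr q - x| + 2 * δ := by linarith
    have e1 : al (n' + 3) = al (n' + 2) - 2 * al (n' + 4) := by
      rw [al_half (n' + 3), al_half (n' + 2)]; ring
    linarith
  have key2 : |qr q - x| < al n' := by
    have h4 : |qr q - x| < al (n' + 1) + 2 * δ := by linarith
    have e1 : al (n' + 1) + 2 * al (n' + 4) < al n' := by
      have e2 : al (n' + 1) = al n' / 2 := al_half n'
      have e3 : al (n' + 4) < al (n' + 2) := al_lt_al (by omega)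
      have e4 : al (n' + 2) = al (n' + 1) / 2 := al_half (n' + 1)
      linarith
    linarith
  -- r ∈ [al (n'+3), al n') : true annulus index is n', n'+1, or n'+2
  by_cases c1 : al (n' + 2) ≤ |qr q - x|
  · by_cases c2 : |qr q - x| < al (n' + 1)
    · -- index n'+1 = n
      exact Or.inr (Or.inl ⟨q, hq, c1, c2⟩)
    · -- index n'
      push_neg at c2
      refine Or.inr (Or.inr ⟨by omega, ?_⟩)
      rw [show (n' + 1) - 1 = n' by omega]
      exact ⟨q, hq, c2, key2⟩
  · -- index n'+2
    push_neg at c1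
    exact Or.inl ⟨q, hq, key1, c1⟩

/-! ### cluster points -/

def Cl (A : Set Q01) : Set ℝ := {x | ∀ γ : ℝ, 0 < γ → {q ∈ A | |qr q - x| < γ}.Infinite}

lemma cl_mono {A B : Set Q01} (h : A ⊆ B) : Cl A ⊆ Cl B := fun x hx γ hγ =>
  (hx γ hγ).mono fun q hq => ⟨h hq.1, hq.2⟩

lemma qr_mem_Icc (q : Q01) : qr q ∈ Set.Icc (0:ℝ) 1 :=
  ⟨show (0:ℝ) ≤ ((q : ℚ) : ℝ) by exact_mod_cast q.2.1,
   show ((q : ℚ) : ℝ) ≤ 1 by exact_mod_cast q.2.2⟩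

lemma exists_cluster {E : Set Q01} (hE : E.Infinite) : ∃ x ∈ Set.Icc (0:ℝ) 1, x ∈ Cl E := by
  let u := hE.natEmbedding
  have hmem : ∀ t : ℕ, qr (u t : Q01) ∈ Set.Icc (0:ℝ) 1 := fun t => qr_mem_Icc _
  obtain ⟨a, ha, φ, hφ, hlim⟩ :=
    (isCompact_Icc (a := (0:ℝ)) (b := 1)).tendsto_subseq hmem
  refine ⟨a, ha, fun γ hγ => ?_⟩
  have hev : ∀ᶠ t in atTop, |qr (u (φ t) : Q01) - a| < γ := by
    have h2 := hlim.eventually (Metric.ball_mem_nhds a hγ)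
    refine h2.mono fun t ht => ?_
    have : dist (qr (u (φ t) : Q01)) a < γ := ht
    rwa [Real.dist_eq] at this
  obtain ⟨T, hT⟩ := eventually_atTop.1 hev
  have hinj : Function.Injective (fun t : ℕ => (u (φ t) : Q01)) := by
    intro a b h
    exact hφ.injective (u.injective (Subtype.ext h))
  have himg : ((fun t : ℕ => (u (φ t) : Q01)) '' (Ici T)).Infinite := by
    refine Set.Infinite.image (fun a _ b _ h => hinj h) ?_
    exact Set.Ici_infinite T
  refine himg.mono ?_
  rintro q ⟨t, ht, rfl⟩
  exact ⟨(u (φ t)).2, hT t ht⟩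

lemma cl_dist_ge {E : Set Q01} {x z c : ℝ} (hx : x ∈ Cl E)
    (h : ∀ q ∈ E, c ≤ |qr q - z|) : c ≤ |x - z| := by
  by_contra hlt; push_neg at hlt
  have hγ : (0:ℝ) < c - |x - z| := by linarith
  obtain ⟨q, hqE, hqx⟩ := (hx _ hγ).nonempty
  have t1 : |qr q - z| ≤ |qr q - x| + |x - z| := abs_sub_le _ _ _
  linarith [h q hqE]

lemma cl_dist_le {E : Set Q01} {x z c : ℝ} (hx : x ∈ Cl E)
    (h : ∀ q ∈ E, |qr q - z| ≤ c) : |x - z| ≤ c := by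
  by_contra hlt; push_neg at hlt
  have hγ : (0:ℝ) < |x - z| - c := by linarith
  obtain ⟨q, hqE, hqx⟩ := (hx _ hγ).nonempty
  have t1 : |x - z| ≤ |x - qr q| + |qr q - z| := abs_sub_le _ _ _
  rw [abs_sub_comm x (qr q)] at t1
  linarith [h q hqE]

lemma cl_mem_Icc {E : Set Q01} {x : ℝ} (hx : x ∈ Cl E) : x ∈ Set.Icc (0:ℝ) 1 := by
  have h := cl_dist_le hx (z := 1/2) (c := 1/2) (fun q hq => by
    have hq1 := (qr_mem_Icc q).1
    have hq2 := (qr_mem_Icc q).2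
    rw [abs_le]; constructor <;> linarith)
  rw [abs_le] at h
  constructor <;> linarith [h.1, h.2]

/-! ### the arithmetical characterization -/

def MatA (k s : ℕ) (x' : Fin k → ℚ) (F : Finset Q01) (A : Set Q01) : Prop :=
  ∀ q ∈ A, q ∈ F ∨ ∃ i, |qr q - (x' i : ℝ)| < 1 / 2 ^ s

def MatB (k j m s : ℕ) (x' : Fin k → ℚ) (A : Set Q01) : Prop :=
  ∀ (i : Fin k) (n : ℕ), m ≤ n → n + 4 ≤ s →
    ((FatAnn A ((x' i : ℝ)) (1 / 2 ^ s) ∩ Iic n).ncard : ℝ) * (j + 1) ≤ n + 1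

def PP (A : Set Q01) : Prop :=
  ∃ k : ℕ, ∀ j : ℕ, ∃ m : ℕ, ∀ s : ℕ, ∃ (x' : Fin k → ℚ) (F : Finset Q01),
    MatA k s x' F A ∧ MatB k j m s x' A

lemma cluster_near {A : Set Q01} {x : ℝ} {k s : ℕ} {x' : Fin k → ℚ} {F : Finset Q01}
    (hx : x ∈ Cl A) (hm : MatA k s x' F A) : ∃ i, |x - (x' i : ℝ)| ≤ 1 / 2 ^ s := by
  have hsel : ∀ t : ℕ, ∃ i, |x - (x' i : ℝ)| < 1 / 2 ^ s + 1 / (t + 1) := by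
    intro t
    have hinf := hx (1 / (t + 1)) (by positivity)
    obtain ⟨q, ⟨⟨hqA, hqx⟩, hqF⟩⟩ := (hinf.diff F.finite_toSet).nonempty
    rcases hm q hqA with h | ⟨i, hi⟩
    · exact absurd h (by simpa using hqF)
    · refine ⟨i, ?_⟩
      have t1 : |x - (x' i : ℝ)| ≤ |x - qr q| + |qr q - (x' i : ℝ)| := abs_sub_le _ _ _
      rw [abs_sub_comm x (qr q)] at t1
      linarith
  choose g hg using hsel
  obtain ⟨i, hfib⟩ := Finite.exists_infinite_fiber g
  by_contra hgt; push_neg at hgt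
  obtain ⟨t0, ht0⟩ := exists_nat_one_div_lt
    (show (0:ℝ) < |x - (x' i : ℝ)| - 1 / 2 ^ s by linarith [hgt i])
  have hfib' : (g ⁻¹' {i}).Infinite := Set.infinite_coe_iff.1 hfib
  obtain ⟨t, htmem, htt⟩ := hfib'.exists_gt t0
  have hgi := hg t
  rw [show g t = i from htmem] at hgi
  have hmono : 1 / ((t:ℝ) + 1) ≤ 1 / ((t0:ℝ) + 1) := by
    apply one_div_le_one_div_of_le (by positivity)
    have : (t0:ℝ) ≤ (t:ℝ) := by exact_mod_cast htt.le
    linarith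
  linarith

/-! ### forward direction -/

lemma ann_cover {A : Set Q01} {F0 : Finset (Set Q01)} (hsub : A ⊆ ⋃₀ ↑F0) (x : ℝ) :
    AnnSet A x ⊆ ⋃ S ∈ F0, AnnSet S x := by
  rintro n ⟨q, hq, h1, h2⟩
  obtain ⟨S, hS, hqS⟩ := hsub hq
  exact mem_biUnion hS ⟨q, hqS, h1, h2⟩

lemma dz_biUnion {F0 : Finset (Set Q01)} {g : Set Q01 → Set ℕ}
    (h : ∀ S ∈ F0, g S ∈ densityZero) : (⋃ S ∈ F0, g S) ∈ densityZero := by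
  classical
  induction F0 using Finset.induction with
  | empty => simpa using dz_empty
  | @insert a s ha ih =>
      rw [Finset.set_biUnion_insert]
      exact dz_union (h _ (Finset.mem_insert_self _ _))
        (ih fun S hS => h S (Finset.mem_insert_of_mem hS))

lemma conv_to_PP {A : Set Q01}
    (hA : A ∈ convQI densityZero (fun n : ℕ => 1 / 2 ^ (n + 1))) : PP A := by
  classical
  obtain ⟨F0, hQ, hsub⟩ := hA
  have hchoice : ∀ S : Set Q01, ∃ x : ℝ, S ∈ F0 → (x ∈ Set.Icc (0:ℝ) 1 ∧
      ConvTo S x ∧ AnnSet S x ∈ densityZero) := by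
    intro S
    by_cases hS : S ∈ F0
    · obtain ⟨x, hx, hconv, hann⟩ := hQ S hS
      exact ⟨x, fun _ => ⟨hx, hconv, hann⟩⟩
    · exact ⟨0, fun h => absurd h hS⟩
  choose xl hxl using hchoice
  set k := F0.card with hk
  let e := F0.equivFin
  let xb : Fin k → ℝ := fun i => xl ((e.symm i) : Set Q01)
  have hAnnA : ∀ i, AnnSet A (xb i) ∈ densityZero := by
    intro i
    refine dz_mono (dz_biUnion (F0 := F0) (g := fun S => AnnSet S (xb i)) ?_)
      (ann_cover hsub _)
    intro S hS
    by_cases hxe : xb i = xl S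
    · rw [hxe]; exact (hxl S hS).2.2
    · exact dz_finite (ann_finite_of_conv_ne (hxl S hS).2.1 hxe)
  refine ⟨k, fun j => ?_⟩
  have hev : ∀ᶠ n in atTop, ∀ i : Fin k,
      (((shifts (AnnSet A (xb i)) ∩ Iic n).ncard : ℝ) + 1) * (j + 1) ≤ n + 1 := by
    rw [eventually_all]
    intro i
    have h1 := dz_shifts (hAnnA i)
    have h2 : Tendsto (fun n : ℕ =>
        ((shifts (AnnSet A (xb i)) ∩ Iic n).ncard : ℝ) / (n + 1) + 1 / (n + 1))
        atTop (𝓝 0) := by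
      simpa using h1.add tendsto_one_div_add_atTop_nhds_zero_nat
    have h3 := h2.eventually_lt_const (show (0:ℝ) < 1 / (j + 1) by positivity)
    refine h3.mono fun n hn => ?_
    have hn1 : (0:ℝ) < (n:ℝ) + 1 := by positivity
    have hj1 : (0:ℝ) < (j:ℝ) + 1 := by positivity
    have e1 : (((shifts (AnnSet A (xb i)) ∩ Iic n).ncard : ℝ) + 1) / (n + 1)
        = ((shifts (AnnSet A (xb i)) ∩ Iic n).ncard : ℝ) / (n + 1) + 1 / (n + 1) :=
      add_div _ _ _
    have h4 : (((shifts (AnnSet A (xb i)) ∩ Iic n).ncard : ℝ) + 1) / (n + 1)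
        < 1 / (j + 1) := by rw [e1]; exact hn
    have := (div_lt_div_iff₀ hn1 hj1).1 h4
    linarith
  obtain ⟨m, hm⟩ := eventually_atTop.1 hev
  refine ⟨m, fun s => ?_⟩
  have hx'ex : ∀ i : Fin k, ∃ ξ : ℚ, |xb i - (ξ:ℝ)| < 1 / 2 ^ (s+1) := by
    intro i
    obtain ⟨ξ, h1, h2⟩ := exists_rat_btwn
      (show xb i < xb i + 1 / 2 ^ (s+1) by
        have : (0:ℝ) < 1 / 2 ^ (s+1) := by positivity
        linarith)
    refine ⟨ξ, ?_⟩
    rw [abs_lt]; constructor <;> linarith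
  choose x' hx' using hx'ex
  have hFfin : {q ∈ A | ∀ i, 1 / 2 ^ (s+1) ≤ |qr q - xb i|}.Finite := by
    refine Set.Finite.subset (Set.Finite.biUnion F0.finite_toSet
      (fun S hS => (hxl S hS).2.1 (1 / 2 ^ (s+1)) (by positivity))) ?_
    rintro q ⟨hqA, hfar⟩
    obtain ⟨S, hSF, hqS⟩ := hsub hqA
    refine mem_biUnion hSF ⟨hqS, ?_⟩
    have hSx : xl S = xb (e ⟨S, hSF⟩) := by simp [xb]
    rw [hSx]
    exact hfar _
  refine ⟨x', hFfin.toFinset, ?_, ?_⟩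
  · intro q hqA
    by_cases hqF : q ∈ hFfin.toFinset
    · exact Or.inl hqF
    · right
      have hnall : ¬ ∀ i, 1 / 2 ^ (s+1) ≤ |qr q - xb i| := fun hall =>
        hqF (hFfin.mem_toFinset.2 ⟨hqA, hall⟩)
      push_neg at hnall
      obtain ⟨i, hi⟩ := hnall
      refine ⟨i, ?_⟩
      have t1 : |qr q - (x' i : ℝ)| ≤ |qr q - xb i| + |xb i - (x' i : ℝ)| := abs_sub_le _ _ _
      have e2 : (1:ℝ) / 2 ^ (s+1) + 1 / 2 ^ (s+1) = 1 / 2 ^ s := by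
        rw [pow_succ]; ring
      linarith [hx' i]
  · intro i n hmn hns
    have hhalf : (1:ℝ) / 2 ^ (s+1) ≤ 1 / 2 ^ s :=
      one_div_pow_le_one_div_pow_of_le one_le_two (Nat.le_succ s)
    have hsubann : FatAnn A ((x' i : ℝ)) (1 / 2 ^ s) ∩ Iic n ⊆
        insert 0 (shifts (AnnSet A (xb i)) ∩ Iic n) := by
      rintro n' ⟨hfat, hn'⟩
      rcases Nat.eq_zero_or_pos n' with rfl | hpos
      · exact mem_insert _ _
      · refine mem_insert_of_mem _ ⟨fat_to_shifts ?_ hpos (by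
          have := mem_Iic.1 hn'
          omega) hfat, hn'⟩
        linarith [hx' i]
    have hcount : (FatAnn A ((x' i : ℝ)) (1 / 2 ^ s) ∩ Iic n).ncard ≤
        (shifts (AnnSet A (xb i)) ∩ Iic n).ncard + 1 := by
      calc (FatAnn A ((x' i : ℝ)) (1 / 2 ^ s) ∩ Iic n).ncard
          ≤ (insert 0 (shifts (AnnSet A (xb i)) ∩ Iic n)).ncard :=
            Set.ncard_le_ncard hsubann ((inter_Iic_finite _ n).insert 0)
        _ ≤ (shifts (AnnSet A (xb i)) ∩ Iic n).ncard + 1 := Set.ncard_insert_le _ _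
    have hcast : ((FatAnn A ((x' i : ℝ)) (1 / 2 ^ s) ∩ Iic n).ncard : ℝ) ≤
        ((shifts (AnnSet A (xb i)) ∩ Iic n).ncard : ℝ) + 1 := by exact_mod_cast hcount
    have hj1 : (0:ℝ) ≤ (j:ℝ) + 1 := by positivity
    calc ((FatAnn A ((x' i : ℝ)) (1 / 2 ^ s) ∩ Iic n).ncard : ℝ) * (j + 1)
        ≤ (((shifts (AnnSet A (xb i)) ∩ Iic n).ncard : ℝ) + 1) * (j + 1) := by
          exact mul_le_mul_of_nonneg_right hcast hj1
      _ ≤ n + 1 := hm n hmn i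

/-! ### backward direction -/

lemma ann_dz_of_cluster {A : Set Q01} {x : ℝ} {k : ℕ}
    (hP : ∀ j : ℕ, ∃ m : ℕ, ∀ s : ℕ, ∃ (x' : Fin k → ℚ) (F : Finset Q01),
      MatA k s x' F A ∧ MatB k j m s x' A)
    (hx : x ∈ Cl A) : AnnSet A x ∈ densityZero := by
  refine dz_of_forall_bound fun j => ?_
  obtain ⟨m, hm⟩ := hP j
  refine ⟨m, fun n hmn => ?_⟩
  obtain ⟨x', F, hA1, hB⟩ := hm (n + 4)
  obtain ⟨i, hi⟩ := cluster_near hx hA1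
  have hsub : AnnSet A x ∩ Iic n ⊆ FatAnn A ((x' i : ℝ)) (1 / 2 ^ (n + 4)) ∩ Iic n :=
    inter_subset_inter_left _ (ann_to_fat hi)
  have hcount : (AnnSet A x ∩ Iic n).ncard ≤
      (FatAnn A ((x' i : ℝ)) (1 / 2 ^ (n + 4)) ∩ Iic n).ncard :=
    Set.ncard_le_ncard hsub (inter_Iic_finite _ n)
  have hB' := hB i n hmn (le_refl (n + 4))
  have hcast : ((AnnSet A x ∩ Iic n).ncard : ℝ) ≤
      ((FatAnn A ((x' i : ℝ)) (1 / 2 ^ (n + 4)) ∩ Iic n).ncard : ℝ) := by exact_mod_cast hcount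
  have hj1 : (0:ℝ) ≤ (j:ℝ) + 1 := by positivity
  calc ((AnnSet A x ∩ Iic n).ncard : ℝ) * (j + 1)
      ≤ ((FatAnn A ((x' i : ℝ)) (1 / 2 ^ (n + 4)) ∩ Iic n).ncard : ℝ) * (j + 1) :=
        mul_le_mul_of_nonneg_right hcast hj1
    _ ≤ n + 1 := hB'

lemma singleton_quick (q : Q01) : IQuick densityZero (fun n : ℕ => 1 / 2 ^ (n + 1)) {q} := by
  refine ⟨qr q, qr_mem_Icc q, ?_, ?_⟩
  · intro ε hε
    exact (Set.finite_singleton q).subset (sep_subset _ _)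
  · refine dz_mono dz_empty ?_
    rintro n ⟨p, hp, h1, h2⟩
    rw [Set.mem_singleton_iff] at hp
    subst hp
    rw [sub_self, abs_zero] at h1
    have h0 : (0:ℝ) < 1 / 2 ^ (n + 1 + 1) := by positivity
    exact absurd h1 (not_le.2 h0)

lemma PP_to_conv {A : Set Q01} (hPP : PP A) :
    A ∈ convQI densityZero (fun n : ℕ => 1 / 2 ^ (n + 1)) := by
  classical
  obtain ⟨k, hP⟩ := hPP
  by_cases hAfin : A.Finite
  · refine ⟨hAfin.toFinset.image (fun q => ({q} : Set Q01)), ?_, ?_⟩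
    · intro S hS
      obtain ⟨q, hq, rfl⟩ := Finset.mem_image.1 hS
      exact singleton_quick q
    · intro q hq
      refine Set.mem_sUnion.2 ⟨{q}, ?_, rfl⟩
      simp only [Finset.coe_image, Set.mem_image, Finset.mem_coe]
      exact ⟨q, hAfin.mem_toFinset.2 hq, rfl⟩
  · have hAinf : A.Infinite := hAfin
    rcases Nat.eq_zero_or_pos k with rfl | hkpos
    · obtain ⟨m, hm⟩ := hP 0
      obtain ⟨x', F, hA1, _⟩ := hm 0
      have hsubF : A ⊆ ↑F := fun q hq => by
        rcases hA1 q hq with h | ⟨i, _⟩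
        · exact h
        · exact i.elim0
      exact absurd (F.finite_toSet.subset hsubF) hAfin
    have hclfin : (Cl A).Finite := by
      by_contra hinf
      have hinf' : (Cl A).Infinite := hinf
      obtain ⟨T, hTsub, hTcard⟩ := hinf'.exists_subset_card_eq (k + 1)
      have hT2 : 1 < T.card := by omega
      obtain ⟨a0, ha0, b0, hb0, hab0⟩ := Finset.one_lt_card.1 hT2
      have hoffne : (T.offDiag).Nonempty := ⟨(a0, b0), Finset.mem_offDiag.2 ⟨ha0, hb0, hab0⟩⟩
      set D := T.offDiag.image (fun p => |p.1 - p.2|) with hD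
      have hDne : D.Nonempty := hoffne.image _
      have hDpos : ∀ d ∈ D, 0 < d := by
        intro d hd
        obtain ⟨p, hp, rfl⟩ := Finset.mem_image.1 hd
        obtain ⟨_, _, hne⟩ := Finset.mem_offDiag.1 hp
        exact abs_pos.2 (sub_ne_zero.2 hne)
      set ε := D.min' hDne with hε
      have hεpos : 0 < ε := hDpos _ (D.min'_mem hDne)
      obtain ⟨N, hN⟩ := exists_al_lt (show (0:ℝ) < ε / 2 by linarith)
      set s := N + 1 with hs
      have hspow : (1:ℝ) / 2 ^ s < ε / 2 := by
        have : al N = 1 / 2 ^ s := by unfold al; rw [hs]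
        linarith [hN, this.symm.le]
      obtain ⟨m, hm⟩ := hP 0
      obtain ⟨x', F, hA1, _⟩ := hm s
      have hex : ∀ x ∈ T, ∃ i : Fin k, |x - (x' i : ℝ)| ≤ 1 / 2 ^ s := fun x hx =>
        cluster_near (hTsub hx) hA1
      let f : ℝ → Fin k := fun x =>
        if h : ∃ i : Fin k, |x - (x' i : ℝ)| ≤ 1 / 2 ^ s then h.choose else ⟨0, hkpos⟩
      have hf : ∀ x ∈ T, |x - (x' (f x) : ℝ)| ≤ 1 / 2 ^ s := by
        intro x hx
        have h := hex x hx
        simp only [f, dif_pos h]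
        exact h.choose_spec
      obtain ⟨a, ha, b, hb, hab, hfab⟩ :=
        Finset.exists_ne_map_eq_of_card_lt_of_maps_to
          (show (Finset.univ : Finset (Fin k)).card < T.card by
            simpa using by omega)
          (fun x _ => Finset.mem_univ (f x))
      have hmemD : |a - b| ∈ D :=
        Finset.mem_image.2 ⟨(a, b), Finset.mem_offDiag.2 ⟨ha, hb, hab⟩, rfl⟩
      have hmin := D.min'_le _ hmemD
      have t1 : |a - b| ≤ |a - (x' (f a) : ℝ)| + |(x' (f a) : ℝ) - b| := abs_sub_le _ _ _
      have t2 : |(x' (f a) : ℝ) - b| = |b - (x' (f b) : ℝ)| := by rw [hfab, abs_sub_comm]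
      linarith [hf a ha, hf b hb, hspow, hmin, t1, t2.le, t2.ge]
    obtain ⟨x0, hx0Icc, hx0⟩ := exists_cluster hAinf
    set T := hclfin.toFinset with hT
    have hx0T : x0 ∈ T := hclfin.mem_toFinset.2 hx0
    set D := T.offDiag.image (fun p => |p.1 - p.2|) with hD
    have hDpos : ∀ d ∈ D, 0 < d := by
      intro d hd
      obtain ⟨p, hp, rfl⟩ := Finset.mem_image.1 hd
      obtain ⟨_, _, hne⟩ := Finset.mem_offDiag.1 hp
      exact abs_pos.2 (sub_ne_zero.2 hne)
    set r := if h : D.Nonempty then D.min' h / 2 else 1 with hr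
    have hr0 : 0 < r := by
      by_cases h : D.Nonempty
      · rw [hr, dif_pos h]
        linarith [hDpos _ (D.min'_mem h)]
      · rw [hr, dif_neg h]; norm_num
    have hrprop : ∀ x ∈ T, ∀ y ∈ Cl A, |y - x| ≤ r → y = x := by
      intro x hxT y hyCl hle
      by_contra hne
      have hyT : y ∈ T := hclfin.mem_toFinset.2 hyCl
      have hmemD : |y - x| ∈ D :=
        Finset.mem_image.2 ⟨(y, x), Finset.mem_offDiag.2 ⟨hyT, hxT, hne⟩, rfl⟩
      have hDne : D.Nonempty := ⟨_, hmemD⟩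
      have hmin := D.min'_le _ hmemD
      rw [hr, dif_pos hDne] at hle
      linarith [hDpos _ (D.min'_mem hDne)]
    set Sx : ℝ → Set Q01 := fun x => {q ∈ A | |qr q - x| < r} with hSx
    have hSconv : ∀ x ∈ T, ConvTo (Sx x) x := by
      intro x hxT ε hεpos
      by_contra hinf
      have hinf' : {q ∈ Sx x | ε ≤ |qr q - x|}.Infinite := hinf
      obtain ⟨y, _, hyCl⟩ := exists_cluster hinf'
      have hyClA : y ∈ Cl A := cl_mono (fun q hq => hq.1.1) hyCl
      have b1 : ε ≤ |y - x| := cl_dist_ge hyCl fun q hq => hq.2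
      have b2 : |y - x| ≤ r := cl_dist_le hyCl fun q hq => hq.1.2.le
      have := hrprop x hxT y hyClA b2
      subst this
      rw [sub_self, abs_zero] at b1
      linarith
    have hSann : ∀ x ∈ T, AnnSet (Sx x) x ∈ densityZero := fun x hxT =>
      dz_mono (ann_dz_of_cluster hP (hclfin.mem_toFinset.1 hxT))
        (ann_mono (fun q hq => hq.1) x)
    set R : Set Q01 := {q ∈ A | ∀ x ∈ T, r ≤ |qr q - x|} with hR
    have hRfin : R.Finite := by
      by_contra hinf
      have hinf' : R.Infinite := hinf
      obtain ⟨y, _, hyCl⟩ := exists_cluster hinf'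
      have hyClA : y ∈ Cl A := cl_mono (fun q hq => hq.1) hyCl
      have hyT : y ∈ T := hclfin.mem_toFinset.2 hyClA
      have b1 : r ≤ |y - y| := cl_dist_ge hyCl fun q hq => hq.2 y hyT
      rw [sub_self, abs_zero] at b1
      linarith
    refine ⟨T.image Sx ∪ hRfin.toFinset.image (fun q => ({q} : Set Q01)), ?_, ?_⟩
    · intro S hS
      rcases Finset.mem_union.1 hS with h | h
      · obtain ⟨x, hxT, rfl⟩ := Finset.mem_image.1 h
        exact ⟨x, cl_mem_Icc (hclfin.mem_toFinset.1 hxT), hSconv x hxT, hSann x hxT⟩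
      · obtain ⟨q, _, rfl⟩ := Finset.mem_image.1 h
        exact singleton_quick q
    · intro q hq
      by_cases hfar : ∀ x ∈ T, r ≤ |qr q - x|
      · refine Set.mem_sUnion.2 ⟨{q}, ?_, rfl⟩
        simp only [Finset.coe_union, Set.mem_union, Finset.coe_image, Set.mem_image,
          Finset.mem_coe]
        exact Or.inr ⟨q, hRfin.mem_toFinset.2 ⟨hq, hfar⟩, rfl⟩
      · push_neg at hfar
        obtain ⟨x, hxT, hlt⟩ := hfar
        refine Set.mem_sUnion.2 ⟨Sx x, ?_, ⟨hq, hlt⟩⟩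
        simp only [Finset.coe_union, Set.mem_union, Finset.coe_image, Set.mem_image,
          Finset.mem_coe]
        exact Or.inl ⟨x, hxT, rfl⟩

lemma PP_iff (A : Set Q01) :
    PP A ↔ A ∈ convQI densityZero (fun n : ℕ => 1 / 2 ^ (n + 1)) :=
  ⟨PP_to_conv, conv_to_PP⟩

/-! ### topological complexity -/

lemma isClosed_matA (k s : ℕ) (x' : Fin k → ℚ) (F : Finset Q01) :
    IsClosed {f : Q01 → Bool | MatA k s x' F (toSet f)} := by
  have he : {f : Q01 → Bool | MatA k s x' F (toSet f)} =
      ⋂ q : Q01, (fun f : Q01 → Bool => f q) ⁻¹'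
        {b : Bool | b = true → (q ∈ F ∨ ∃ i, |qr q - (x' i : ℝ)| < 1 / 2 ^ s)} := by
    ext f
    simp only [mem_setOf_eq, mem_iInter, mem_preimage]
    exact ⟨fun h q hb => h q hb, fun h q hq => h q hq⟩
  rw [he]
  exact isClosed_iInter fun q => (isClosed_discrete _).preimage (continuous_apply q)

lemma ncard_le_iff_finsets {S : Set ℕ} (hS : S.Finite) {c b : ℝ} (hc : 0 ≤ c) :
    (S.ncard : ℝ) * c ≤ b ↔ ∀ G : Finset ℕ, ↑G ⊆ S → (G.card : ℝ) * c ≤ b := by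
  constructor
  · intro h G hG
    have h1 : G.card ≤ S.ncard := by
      rw [← Set.ncard_coe_finset]
      exact Set.ncard_le_ncard hG hS
    exact le_trans (mul_le_mul_of_nonneg_right (by exact_mod_cast h1) hc) h
  · intro h
    have h2 := h hS.toFinset (by simp)
    have h3 : S.ncard = hS.toFinset.card := Set.ncard_eq_toFinset_card S hS
    rw [h3]
    exact h2

lemma isOpen_mem_fat (x δ : ℝ) (n' : ℕ) :
    IsOpen {f : Q01 → Bool | n' ∈ FatAnn (toSet f) x δ} := by
  have he : {f : Q01 → Bool | n' ∈ FatAnn (toSet f) x δ} =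
      ⋃ q : Q01, ⋃ (_ : al (n' + 1) ≤ |qr q - x| + δ ∧ |qr q - x| < al n' + δ),
        (fun f : Q01 → Bool => f q) ⁻¹' {b | b = true} := by
    ext f
    simp only [mem_setOf_eq, mem_iUnion, mem_preimage]
    constructor
    · rintro ⟨q, hq, h1, h2⟩; exact ⟨q, ⟨h1, h2⟩, hq⟩
    · rintro ⟨q, ⟨h1, h2⟩, hq⟩; exact ⟨q, hq, h1, h2⟩
  rw [he]
  exact isOpen_iUnion fun q => isOpen_iUnion fun _ =>
    (isOpen_discrete _).preimage (continuous_apply q)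

lemma isClosed_matB (k j m s : ℕ) (x' : Fin k → ℚ) :
    IsClosed {f : Q01 → Bool | MatB k j m s x' (toSet f)} := by
  have he : {f : Q01 → Bool | MatB k j m s x' (toSet f)} =
      ⋂ (i : Fin k), ⋂ (n : ℕ), ⋂ (_ : m ≤ n), ⋂ (_ : n + 4 ≤ s), ⋂ (G : Finset ℕ),
        {f : Q01 → Bool |
          (↑G ⊆ FatAnn (toSet f) ((x' i : ℝ)) (1 / 2 ^ s) ∩ Iic n) →
            (G.card : ℝ) * (j + 1) ≤ n + 1} := by
    ext f
    simp only [mem_setOf_eq, mem_iInter, MatB]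
    constructor
    · intro h i n hmn hns G hG
      exact (ncard_le_iff_finsets (inter_Iic_finite _ n) (by positivity)).1 (h i n hmn hns) G hG
    · intro h i n hmn hns
      exact (ncard_le_iff_finsets (inter_Iic_finite _ n) (by positivity)).2 (h i n hmn hns)
  rw [he]
  refine isClosed_iInter fun i => isClosed_iInter fun n => isClosed_iInter fun _ =>
    isClosed_iInter fun _ => isClosed_iInter fun G => ?_
  by_cases hb : (G.card : ℝ) * (j + 1) ≤ n + 1
  · have heq : {f : Q01 → Bool |
        (↑G ⊆ FatAnn (toSet f) ((x' i : ℝ)) (1 / 2 ^ s) ∩ Iic n) →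
          (G.card : ℝ) * (j + 1) ≤ n + 1} = univ := by
      ext f; simp [hb]
    rw [heq]; exact isClosed_univ
  · have heq : {f : Q01 → Bool |
        (↑G ⊆ FatAnn (toSet f) ((x' i : ℝ)) (1 / 2 ^ s) ∩ Iic n) →
          (G.card : ℝ) * (j + 1) ≤ n + 1} =
        {f : Q01 → Bool | ↑G ⊆ FatAnn (toSet f) ((x' i : ℝ)) (1 / 2 ^ s) ∩ Iic n}ᶜ := by
      ext f; simp [hb]
    rw [heq]
    refine IsOpen.isClosed_compl ?_
    by_cases hGn : ∀ n' ∈ G, n' ≤ n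
    · have heq2 : {f : Q01 → Bool | ↑G ⊆ FatAnn (toSet f) ((x' i : ℝ)) (1 / 2 ^ s) ∩ Iic n} =
          ⋂ n' ∈ G, {f : Q01 → Bool | n' ∈ FatAnn (toSet f) ((x' i : ℝ)) (1 / 2 ^ s)} := by
        ext f
        simp only [mem_setOf_eq, mem_iInter]
        constructor
        · intro h n' hn'
          exact (h (Finset.mem_coe.2 hn')).1
        · intro h n' hn'
          have hn'G := Finset.mem_coe.1 hn'
          exact ⟨h n' hn'G, Set.mem_Iic.2 (hGn n' hn'G)⟩
      rw [heq2]
      exact isOpen_biInter_finset fun n' _ => isOpen_mem_fat _ _ _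
    · push_neg at hGn
      obtain ⟨n0, hn0G, hn0⟩ := hGn
      have heq2 : {f : Q01 → Bool | ↑G ⊆ FatAnn (toSet f) ((x' i : ℝ)) (1 / 2 ^ s) ∩ Iic n} =
          (∅ : Set (Q01 → Bool)) := by
        ext f
        simp only [mem_setOf_eq, mem_empty_iff_false, iff_false]
        intro h
        exact absurd (Set.mem_Iic.1 (h (Finset.mem_coe.2 hn0G)).2) (by omega)
      rw [heq2]
      exact isOpen_empty

theorem isSigma06_PP : IsSigma0 6 {f : Q01 → Bool | PP (toSet f)} := by
  classical
  refine ⟨fun k => {f | ∀ j : ℕ, ∃ m : ℕ, ∀ s : ℕ, ∃ (x' : Fin k → ℚ) (F : Finset Q01),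
      MatA k s x' F (toSet f) ∧ MatB k j m s x' (toSet f)}, fun k => ?_, ?_⟩
  · show IsSigma0 5 _
    refine ⟨fun j => {f | ∃ m : ℕ, ∀ s : ℕ, ∃ (x' : Fin k → ℚ) (F : Finset Q01),
        MatA k s x' F (toSet f) ∧ MatB k j m s x' (toSet f)}ᶜ, fun j => ?_, ?_⟩
    · rw [compl_compl]
      show IsSigma0 4 _
      refine ⟨fun m => {f | ∀ s : ℕ, ∃ (x' : Fin k → ℚ) (F : Finset Q01),
          MatA k s x' F (toSet f) ∧ MatB k j m s x' (toSet f)}, fun m => ?_, ?_⟩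
      · show IsSigma0 3 _
        refine ⟨fun s => {f | ∃ (x' : Fin k → ℚ) (F : Finset Q01),
            MatA k s x' F (toSet f) ∧ MatB k j m s x' (toSet f)}ᶜ, fun s => ?_, ?_⟩
        · rw [compl_compl]
          show IsSigma0 2 _
          obtain ⟨e, he⟩ := exists_surjective_nat ((Fin k → ℚ) × Finset Q01)
          refine ⟨fun t => {f | MatA k s (e t).1 (e t).2 (toSet f) ∧
              MatB k j m s (e t).1 (toSet f)}, fun t => ?_, ?_⟩
          · show IsOpen _
            rw [isOpen_compl_iff]
            exact ((isClosed_matA k s (e t).1 (e t).2).inter (isClosed_matB k j m s (e t).1))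
          · ext f
            simp only [mem_setOf_eq, mem_iUnion]
            constructor
            · rintro ⟨x', F, h1, h2⟩
              obtain ⟨t, ht⟩ := he (x', F)
              refine ⟨t, ?_, ?_⟩
              · rw [ht]; exact h1
              · rw [ht]; exact h2
            · rintro ⟨t, h1, h2⟩
              exact ⟨(e t).1, (e t).2, h1, h2⟩
        · ext f
          simp only [mem_compl_iff, mem_setOf_eq, mem_iUnion, not_forall]
      · ext f
        simp only [mem_setOf_eq, mem_iUnion]
    · ext f
      simp only [mem_compl_iff, mem_setOf_eq, mem_iUnion, not_forall]
  · ext f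
    simp only [mem_setOf_eq, mem_iUnion, PP]

end ConvSigma

theorem convQI_density_sigma06 :
    IsSigma0 6 {f : Q01 → Bool |
      toSet f ∈ convQI densityZero (fun n : ℕ => 1 / 2 ^ (n + 1))} := by
  have h : {f : Q01 → Bool | toSet f ∈ convQI densityZero (fun n : ℕ => 1 / 2 ^ (n + 1))}
      = {f : Q01 → Bool | ConvSigma.PP (toSet f)} := by
    ext f
    exact (ConvSigma.PP_iff (toSet f)).symm
  rw [h]
  exact ConvSigma.isSigma06_PP
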